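/- Let p be an odd integer and q ≥ 2 an integer. The assignment a ↦ j, b ↦ exp(iπ/q) = cos(π/q) + sin(π/q)·i extends to a group homomorphism from ⟨a, b | a b a⁻¹ = b⁻¹, a^{2p} b^{q} = 1⟩ to the unit quaternions, and this homomorphism has non-abelian image. -/

import Mathlib

open Metric Real
open scoped Quaternion

/-- The relator set of `⟨a, b | a b a⁻¹ = b⁻¹, a^(2p) b^q = 1⟩`,
with `a = FreeGroup.of 0` and `b = FreeGroup.of 1`. -/
def surgeryRels (p : ℤ) (q : ℕ) : Set (FreeGroup (Fin 2)) :=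
  {FreeGroup.of 0 * FreeGroup.of 1 * (FreeGroup.of 0)⁻¹ * FreeGroup.of 1,
   (FreeGroup.of 0) ^ (2 * p) * (FreeGroup.of 1) ^ q}


private lemma mem_sphere_of_normSq' {x : Quaternion ℝ} (h : Quaternion.normSq x = 1) :
    x ∈ sphere (0 : Quaternion ℝ) 1 := by
  rw [mem_sphere_zero_iff_norm]
  nlinarith [Quaternion.normSq_eq_norm_mul_self x, norm_nonneg x]

private noncomputable def eQ (θ : ℝ) : Quaternion ℝ := ⟨Real.cos θ, Real.sin θ, 0, 0⟩

private lemma eQ_mul (θ φ : ℝ) : eQ θ * eQ φ = eQ (θ + φ) := by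
  ext <;> simp only [Quaternion.re_mul, Quaternion.imI_mul, Quaternion.imJ_mul, Quaternion.imK_mul] <;> simp [eQ, Real.cos_add, Real.sin_add] <;> ring

private lemma eQ_pow (θ : ℝ) (n : ℕ) : (eQ θ) ^ n = eQ (n * θ) := by
  induction n with
  | zero => rw [pow_zero]; ext <;> simp [eQ]
  | succ n ih => rw [pow_succ, ih, eQ_mul]; push_cast; ring_nf

/-- For `p` odd and `q ≥ 2`, the assignment `a ↦ j`, `b ↦ exp(iπ/q)` extends to a
homomorphism from `⟨a, b | a b a⁻¹ = b⁻¹, a^(2p) b^q = 1⟩` to the unit quaternions,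
and this homomorphism has non-abelian image. -/
theorem stmt9 (p : ℤ) (hp : Odd p) (q : ℕ) (hq : 2 ≤ q) :
    ∃ ρ : PresentedGroup (surgeryRels p q) →* sphere (0 : Quaternion ℝ) 1,
      (ρ (PresentedGroup.of 0) : Quaternion ℝ) = (⟨0, 0, 1, 0⟩ : Quaternion ℝ) ∧
      (ρ (PresentedGroup.of 1) : Quaternion ℝ) =
        (⟨Real.cos (π / q), Real.sin (π / q), 0, 0⟩ : Quaternion ℝ) ∧
      ∃ x y, ρ x * ρ y ≠ ρ y * ρ x := by
  set θ : ℝ := π / q with hθ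
  set j : Quaternion ℝ := ⟨0, 0, 1, 0⟩ with hj
  have hq0 : (q : ℝ) ≠ 0 := by positivity
  have hpyth : Real.sin θ ^ 2 + Real.cos θ ^ 2 = 1 := Real.sin_sq_add_cos_sq θ
  have hjmem : j ∈ sphere (0 : Quaternion ℝ) 1 := by
    apply mem_sphere_of_normSq' (x := j); rw [Quaternion.normSq_def']; simp [hj]
  have hemem : eQ θ ∈ sphere (0 : Quaternion ℝ) 1 := by
    apply mem_sphere_of_normSq' (x := eQ θ); rw [Quaternion.normSq_def']; simp [eQ]
  set J : sphere (0 : Quaternion ℝ) 1 := ⟨j, hjmem⟩ with hJ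
  set E : sphere (0 : Quaternion ℝ) 1 := ⟨eQ θ, hemem⟩ with hE
  set f : Fin 2 → sphere (0 : Quaternion ℝ) 1 := ![J, E] with hf
  -- quaternion computations
  have hjinv : j⁻¹ = ⟨0, 0, -1, 0⟩ := by
    apply inv_eq_of_mul_eq_one_right
    have hneg : (⟨0, 0, -1, 0⟩ : Quaternion ℝ) = -j := by
      apply Quaternion.ext <;> simp only [Quaternion.re_neg, Quaternion.imI_neg, Quaternion.imJ_neg, Quaternion.imK_neg] <;> simp [hj]
    have hjj : j * j = -1 := by
      apply Quaternion.ext <;> simp only [Quaternion.re_mul, Quaternion.imI_mul, Quaternion.imJ_mul, Quaternion.imK_mul] <;> simp [hj]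
    rw [hneg, mul_neg, hjj, neg_neg]
  have hrel1 : j * eQ θ * j⁻¹ * eQ θ = 1 := by
    apply Quaternion.ext <;> simp only [Quaternion.re_mul, Quaternion.imI_mul, Quaternion.imJ_mul, Quaternion.imK_mul] <;> rw [hjinv] <;> simp [hj, eQ] <;> nlinarith [hpyth]
  have hjsq : j ^ (2 : ℤ) = -1 := by
    rw [zpow_two]; apply Quaternion.ext <;> simp only [Quaternion.re_mul, Quaternion.imI_mul, Quaternion.imJ_mul, Quaternion.imK_mul] <;> simp [hj]
  have hj2p : j ^ (2 * p) = -1 := by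
    rw [zpow_mul, hjsq, hp.neg_one_zpow]
  have heq : (eQ θ) ^ q = -1 := by
    rw [eQ_pow, hθ, mul_div_cancel₀ _ hq0]
    ext <;> simp [eQ]
  have hrel2 : j ^ (2 * p) * (eQ θ) ^ q = 1 := by
    rw [hj2p, heq, neg_mul_neg, one_mul]
  -- relators vanish
  have h : ∀ r ∈ surgeryRels p q, FreeGroup.lift f r = 1 := by
    rintro r (rfl | rfl)
    · apply Subtype.ext
      simp only [map_mul, map_inv, FreeGroup.lift_apply_of, hf, Matrix.cons_val_zero,
        Matrix.cons_val_one, Matrix.head_cons, unitSphere.coe_mul, unitSphere.coe_inv,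
        unitSphere.coe_one, hJ, hE]
      exact hrel1
    · apply Subtype.ext
      simp only [map_mul, map_zpow, map_pow, FreeGroup.lift_apply_of, hf, Matrix.cons_val_zero,
        Matrix.cons_val_one, Matrix.head_cons, unitSphere.coe_mul, unitSphere.coe_zpow,
        unitSphere.coe_pow, unitSphere.coe_one, hJ, hE]
      exact hrel2
  refine ⟨PresentedGroup.toGroup h, ?_, ?_, ?_⟩
  · rw [PresentedGroup.toGroup.of]; rfl
  · rw [PresentedGroup.toGroup.of]; rfl
  · refine ⟨PresentedGroup.of 0, PresentedGroup.of 1, fun hcomm => ?_⟩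
    have := congrArg (fun z : sphere (0 : Quaternion ℝ) 1 => (z : Quaternion ℝ).imK) hcomm
    simp only [PresentedGroup.toGroup.of, unitSphere.coe_mul, hf, Matrix.cons_val_zero,
      Matrix.cons_val_one, Matrix.head_cons, hJ, hE] at this
    have hcalc : (j * eQ θ).imK = -Real.sin θ ∧ (eQ θ * j).imK = Real.sin θ := by
      constructor <;> simp only [Quaternion.imK_mul] <;> simp [hj, eQ]
    have hsin : 0 < Real.sin θ := by
      apply Real.sin_pos_of_pos_of_lt_pi
      · rw [hθ]; positivity
      · rw [hθ]
        calc π / q ≤ π / 2 := by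
              apply div_le_div_of_nonneg_left Real.pi_pos.le (by norm_num)
              exact_mod_cast hq
          _ < π := by linarith [Real.pi_pos]
    rw [hcalc.1, hcalc.2] at this
    linarith
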